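/- Let E_1,...,E_{n+1} be exchangeable real-valued random variables (i.e., their joint distribution is invariant under permutations). Let Q̂ be the ⌈(1−α)(n+1)⌉-th smallest value among E_1,...,E_n, where α ∈ (0,1) and ⌈(1−α)(n+1)⌉ ≤ n. Then P(E_{n+1} ≤ Q̂) ≥ 1 − α. -/

import Mathlib

open MeasureTheory

/-- The `r`-th smallest element (1-indexed) of a list of reals. -/
noncomputable def kthSmallest (l : List ℝ) (r : ℕ) : ℝ :=
  (l.insertionSort (· ≤ ·)).getD (r - 1) 0

open scoped ENNReal NNReal

lemma sorted_le_getD_iff (s : List ℝ) (hs : s.Pairwise (· ≤ ·)) (k : ℕ) (hk : k < s.length) (x : ℝ) :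
    x ≤ s.getD k 0 ↔ s.countP (fun y => decide (y < x)) ≤ k := by
  rw [List.getD_eq_getElem s 0 hk]
  constructor
  · intro hx
    have h0 : (s.drop k).countP (fun y => decide (y < x)) = 0 := by
      rw [List.countP_eq_zero]
      intro a ha
      simp only [decide_eq_true_eq, not_lt]
      obtain ⟨i, hi, rfl⟩ := List.getElem_of_mem ha
      rw [List.getElem_drop]
      refine le_trans hx ?_
      have := hs.rel_get_of_le (a := ⟨k, hk⟩) (b := ⟨k + i, by simp at hi; omega⟩)
        (by simp [Fin.le_def])
      simpa using this
    calc s.countP (fun y => decide (y < x))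
        = (s.take k).countP (fun y => decide (y < x))
          + (s.drop k).countP (fun y => decide (y < x)) := by
          rw [← List.countP_append, List.take_append_drop]
      _ ≤ (s.take k).length + 0 := by
          rw [h0]; exact Nat.add_le_add_right List.countP_le_length 0
      _ ≤ k := by simp [List.length_take]
  · intro hc
    by_contra hx
    push_neg at hx
    have hall : (s.take (k+1)).countP (fun y => decide (y < x)) = (s.take (k+1)).length := by
      rw [List.countP_eq_length]
      intro a ha
      simp only [decide_eq_true_eq]
      obtain ⟨i, hi, rfl⟩ := List.getElem_of_mem ha
      rw [List.getElem_take]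
      have hilen : i < s.length := lt_of_lt_of_le hi (by simp [List.length_take]) |>.trans_le (le_refl _)
      refine lt_of_le_of_lt ?_ hx
      have := hs.rel_get_of_le (a := ⟨i, by omega⟩) (b := ⟨k, hk⟩)
        (by simp [Fin.le_def]; simp [List.length_take] at hi; omega)
      simpa using this
    have : k + 1 ≤ s.countP (fun y => decide (y < x)) := by
      calc k + 1 = (s.take (k+1)).length := by simp [List.length_take]; omega
        _ = (s.take (k+1)).countP (fun y => decide (y < x)) := hall.symm
        _ ≤ s.countP (fun y => decide (y < x)) := by
            conv_rhs => rw [← List.take_append_drop (k+1) s]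
            rw [List.countP_append]; omega
    omega

lemma kth_iff (l : List ℝ) (r : ℕ) (hr1 : 1 ≤ r) (hrl : r ≤ l.length) (x : ℝ) :
    x ≤ kthSmallest l r ↔ l.countP (fun y => decide (y < x)) < r := by
  have hperm := List.perm_insertionSort (· ≤ ·) l
  have hlen : (l.insertionSort (· ≤ ·)).length = l.length := List.length_insertionSort _ l
  have hs : (l.insertionSort (· ≤ ·)).Pairwise (· ≤ ·) := List.pairwise_insertionSort _ l
  rw [kthSmallest, sorted_le_getD_iff _ hs (r-1) (by omega) x, hperm.countP_eq]
  omega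

lemma countP_ofFn {n : ℕ} (v : Fin n → ℝ) (p : ℝ → Prop) [DecidablePred p] :
    (List.ofFn v).countP (fun y => decide (p y))
      = (Finset.univ.filter fun i => p (v i)).card := by
  rw [List.ofFn_eq_map, List.countP_map, Fin.univ_def]
  simp [Finset.filter, Finset.card, Multiset.filter, Multiset.card,
    List.countP_eq_length_filter, Function.comp]
  rfl

lemma card_filter_comp_perm {N : ℕ} (σ : Equiv.Perm (Fin N)) (p : Fin N → Prop)
    [DecidablePred p] :
    (Finset.univ.filter fun i => p (σ i)).card = (Finset.univ.filter p).card := by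
  refine Finset.card_bij (fun i _ => σ i) ?_ ?_ ?_
  · intro a ha; simp only [Finset.mem_filter, Finset.mem_univ, true_and] at ha ⊢; exact ha
  · intro a _ b _ h; exact σ.injective h
  · intro b hb; simp only [Finset.mem_filter, Finset.mem_univ, true_and] at hb
    exact ⟨σ.symm b, by simp [hb], by simp⟩

lemma pigeonhole {N : ℕ} (v : Fin N → ℝ) (r : ℕ) (hr : r ≤ N) :
    r ≤ (Finset.univ.filter fun j =>
      (Finset.univ.filter fun i => v i < v j).card < r).card := by
  set σ := Tuple.sort v with hσ
  have hmono : Monotone (v ∘ σ) := Tuple.monotone_sort v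
  have key : ∀ k : Fin N, (k : ℕ) < r →
      (Finset.univ.filter fun i => v i < v (σ k)).card < r := by
    intro k hk
    have h1 : (Finset.univ.filter fun i => v i < v (σ k)).card
        = (Finset.univ.filter fun m => v (σ m) < v (σ k)).card :=
      (card_filter_comp_perm σ _).symm
    rw [h1]
    have hsub : (Finset.univ.filter fun m => v (σ m) < v (σ k)) ⊆ Finset.Iio k := by
      intro m hm
      simp only [Finset.mem_filter, Finset.mem_univ, true_and] at hm
      rw [Finset.mem_Iio]
      by_contra h
      exact absurd (hmono (not_lt.mp h : k ≤ m)) (not_le.mpr hm)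
    calc (Finset.univ.filter fun m => v (σ m) < v (σ k)).card
        ≤ (Finset.Iio k).card := Finset.card_le_card hsub
      _ = (k : ℕ) := Fin.card_Iio k
      _ < r := hk
  -- map from {k : Fin N | k < r} into the target set
  have : Finset.image (fun k => σ k) (Finset.univ.filter fun k : Fin N => (k : ℕ) < r)
      ⊆ Finset.univ.filter fun j =>
        (Finset.univ.filter fun i => v i < v j).card < r := by
    intro j hj
    simp only [Finset.mem_image, Finset.mem_filter, Finset.mem_univ, true_and] at hj ⊢
    obtain ⟨k, hk, rfl⟩ := hj
    exact key k hk
  have hcard : (Finset.univ.filter fun k : Fin N => (k : ℕ) < r).card = r := by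
    have himg : (Finset.univ.filter fun k : Fin N => (k : ℕ) < r)
        = Finset.image (Fin.castLE hr) Finset.univ := by
      ext k
      simp only [Finset.mem_filter, Finset.mem_univ, true_and, Finset.mem_image]
      constructor
      · intro hk; exact ⟨⟨k, hk⟩, rfl⟩
      · rintro ⟨j, rfl⟩; exact j.isLt
    rw [himg, Finset.card_image_of_injective _ (Fin.castLE_injective hr), Finset.card_univ,
      Fintype.card_fin]
  calc r = (Finset.univ.filter fun k : Fin N => (k : ℕ) < r).card := hcard.symm
      _ = (Finset.image (fun k => σ k) (Finset.univ.filter fun k : Fin N => (k : ℕ) < r)).card :=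
        (Finset.card_image_of_injective _ σ.injective).symm
      _ ≤ _ := Finset.card_le_card this

theorem split_conformal_coverage
    {Ω : Type*} [MeasurableSpace Ω] (P : Measure Ω) [IsProbabilityMeasure P]
    (n : ℕ) (E : Fin (n + 1) → Ω → ℝ) (hmeas : ∀ i, Measurable (E i))
    (hexch : ∀ σ : Equiv.Perm (Fin (n + 1)),
      Measure.map (fun ω (i : Fin (n + 1)) => E (σ i) ω) P
        = Measure.map (fun ω (i : Fin (n + 1)) => E i ω) P)
    (α : ℝ) (hα : α ∈ Set.Ioo (0:ℝ) 1)
    (hrank : ⌈(1 - α) * (n + 1 : ℝ)⌉₊ ≤ n) :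
    ENNReal.ofReal (1 - α)
      ≤ P {ω | E (Fin.last n) ω
            ≤ kthSmallest (List.ofFn fun i : Fin n => E i.castSucc ω)
                ⌈(1 - α) * (n + 1 : ℝ)⌉₊} := by
  classical
  obtain ⟨hα0, hα1⟩ := hα
  set r : ℕ := ⌈(1 - α) * (n + 1 : ℝ)⌉₊ with hrdef
  have hpos : (0:ℝ) < (1 - α) * (n + 1 : ℝ) := mul_pos (by linarith) (by positivity)
  have hr1 : 1 ≤ r := Nat.one_le_iff_ne_zero.mpr (by
    simp only [hrdef, ne_eq, Nat.ceil_eq_zero, not_le]; linarith)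
  -- the event as a measurable set in the product space
  set S : Set (Fin (n+1) → ℝ) :=
    {v | (Finset.univ.filter fun i => v i < v (Fin.last n)).card < r} with hSdef
  have hcount : Measurable fun v : Fin (n+1) → ℝ =>
      (Finset.univ.filter fun i => v i < v (Fin.last n)).card := by
    simp only [Finset.card_filter]
    exact Finset.measurable_sum _ fun i _ =>
      Measurable.ite (measurableSet_lt (measurable_pi_apply i)
        (measurable_pi_apply (Fin.last n))) measurable_const measurable_const
  have hS : MeasurableSet S := hcount (by trivial : MeasurableSet (Set.Iio r))
  set f : Ω → (Fin (n+1) → ℝ) := fun ω i => E i ω with hfdef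
  have hf : Measurable f := measurable_pi_lambda _ hmeas
  set A : Fin (n+1) → Set Ω :=
    fun j => (fun ω (i : Fin (n+1)) => E (Equiv.swap j (Fin.last n) i) ω) ⁻¹' S with hAdef
  have hg : ∀ j : Fin (n+1),
      Measurable (fun ω (i : Fin (n+1)) => E (Equiv.swap j (Fin.last n) i) ω) :=
    fun j => measurable_pi_lambda _ fun i => hmeas _
  have hA : ∀ j, MeasurableSet (A j) := fun j => (hg j) hS
  have hPA : ∀ j, P (A j) = P (f ⁻¹' S) := by
    intro j
    rw [hAdef]
    rw [← Measure.map_apply (hg j) hS, ← Measure.map_apply hf hS, hexch (Equiv.swap j (Fin.last n))]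
  -- pointwise description of A j
  have hAj : ∀ j (ω : Ω), ω ∈ A j ↔
      (Finset.univ.filter fun i => E i ω < E j ω).card < r := by
    intro j ω
    simp only [hAdef, Set.mem_preimage, hSdef, Set.mem_setOf_eq]
    rw [card_filter_comp_perm (Equiv.swap j (Fin.last n))
      (fun i => E i ω < E (Equiv.swap j (Fin.last n) (Fin.last n)) ω)]
    simp [Equiv.swap_apply_right]
  -- pointwise: each ω is in at least r of the A j
  have hpoint : ∀ ω : Ω, (r : ℝ≥0∞) ≤ ∑ j : Fin (n+1), (A j).indicator 1 ω := by
    intro ω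
    have hsum : ∑ j : Fin (n+1), (A j).indicator (1 : Ω → ℝ≥0∞) ω
        = ((Finset.univ.filter fun j => ω ∈ A j).card : ℝ≥0∞) := by
      rw [Finset.card_filter]
      push_cast
      refine Finset.sum_congr rfl fun j _ => ?_
      by_cases h : ω ∈ A j <;> simp [h, Set.indicator]
    rw [hsum]
    have := pigeonhole (fun i => E i ω) r (by omega)
    have hsame : (Finset.univ.filter fun j => ω ∈ A j)
        = Finset.univ.filter fun j =>
            (Finset.univ.filter fun i => E i ω < E j ω).card < r := by
      apply Finset.filter_congr
      intro j _
      simp [hAj j ω]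
    rw [hsame]
    exact_mod_cast this
  -- sum of measures is at least r
  have hsumP : (r : ℝ≥0∞) ≤ ∑ j : Fin (n+1), P (A j) := by
    have h1 : ∑ j : Fin (n+1), P (A j)
        = ∫⁻ ω, ∑ j : Fin (n+1), (A j).indicator 1 ω ∂P := by
      rw [lintegral_finset_sum _ fun j _ => measurable_one.indicator (hA j)]
      exact Finset.sum_congr rfl fun j _ => (lintegral_indicator_one (hA j)).symm
    rw [h1]
    calc (r : ℝ≥0∞) = ∫⁻ _, (r : ℝ≥0∞) ∂P := by simp
      _ ≤ _ := lintegral_mono hpoint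
  have hall : ∑ j : Fin (n+1), P (A j) = (n+1 : ℝ≥0∞) * P (f ⁻¹' S) := by
    rw [Finset.sum_congr rfl fun j _ => hPA j, Finset.sum_const, Finset.card_univ,
      Fintype.card_fin, nsmul_eq_mul]
    push_cast
    ring
  have hkey : (r : ℝ≥0∞) ≤ (n+1 : ℝ≥0∞) * P (f ⁻¹' S) := hall ▸ hsumP
  -- from the key inequality derive the bound
  have hbound : ENNReal.ofReal (1 - α) ≤ P (f ⁻¹' S) := by
    have hle : ENNReal.ofReal (1 - α) * (n+1 : ℝ≥0∞) ≤ (r : ℝ≥0∞) := by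
      have : ENNReal.ofReal (1 - α) * (n+1 : ℝ≥0∞) = ENNReal.ofReal ((1 - α) * (n+1 : ℝ)) := by
        rw [ENNReal.ofReal_mul (by linarith)]
        congr 1
        rw [ENNReal.ofReal_add (by positivity) zero_le_one, ENNReal.ofReal_natCast,
          ENNReal.ofReal_one]
      rw [this]
      refine le_trans (ENNReal.ofReal_le_ofReal (Nat.le_ceil _)) ?_
      simp [hrdef]
    have h2 : ENNReal.ofReal (1 - α) * (n+1 : ℝ≥0∞) ≤ (n+1 : ℝ≥0∞) * P (f ⁻¹' S) :=
      le_trans hle hkey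
    rw [mul_comm (n+1 : ℝ≥0∞) _] at h2
    exact (ENNReal.mul_le_mul_iff_left (by simp) (by simp)).mp h2
  -- identify the target event with f ⁻¹' S
  have hset : {ω | E (Fin.last n) ω
      ≤ kthSmallest (List.ofFn fun i : Fin n => E i.castSucc ω) r} = f ⁻¹' S := by
    ext ω
    simp only [Set.mem_setOf_eq, Set.mem_preimage, hSdef, hfdef]
    rw [kth_iff _ r hr1 (by simp [hrank]), countP_ofFn]
    constructor <;> intro h <;> [skip; skip] <;>
    · have hcast : (Finset.univ.filter fun i : Fin (n+1) => E i ω < E (Fin.last n) ω).card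
          = (Finset.univ.filter fun i : Fin n => E i.castSucc ω < E (Fin.last n) ω).card := by
        rw [Finset.card_filter, Finset.card_filter, Fin.sum_univ_castSucc]
        simp
      omega
  rw [hset]
  exact hbound
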